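/- Let r > 0, let v : B_r → ℝ be continuously differentiable on the Euclidean disk B_r ⊂ ℝ², let M be a real 2×2 matrix, a ∈ ℝ² and c ∈ ℝ, and define g : B_r \ {0} → ℝ by g(x) = ⟨x, M a⟩/(2π|x|²) + (c/2π) log|x|. Then lim_{s→0⁺} ∫_0^{2π} [ v(γ_s(φ)) ∂_r g(γ_s(φ)) − g(γ_s(φ)) ∂_r v(γ_s(φ)) ] s dφ = c·v(0) − ⟨M a, ∇v(0)⟩, where γ_s(φ) = (s cos φ, s sin φ) and ∂_r f(x) = ⟨x/|x|, ∇f(x)⟩ denotes the radial derivative. -/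

import Mathlib

/- STATEMENT 8:
Let r > 0, v : B_r → ℝ be C¹ on the disk B_r ⊂ ℝ², M a real 2×2 matrix, a ∈ ℝ², c ∈ ℝ,
and g(x) = ⟨x, M a⟩/(2π|x|²) + (c/2π) log|x| on B_r \ {0}. Then
lim_{s→0⁺} ∫_0^{2π} [ v(γ_s(φ)) ∂_r g(γ_s(φ)) − g(γ_s(φ)) ∂_r v(γ_s(φ)) ] s dφ
  = c·v(0) − ⟨M a, ∇v(0)⟩,
with γ_s(φ) = (s cos φ, s sin φ) and ∂_r f(x) = ⟨x/|x|, ∇f(x)⟩. -/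

noncomputable section

open Real Set Filter MeasureTheory
open scoped RealInnerProductSpace Topology

abbrev E2 : Type := EuclideanSpace ℝ (Fin 2)

/-- Matrix-vector multiplication on ℝ². -/
def matVec (M : Matrix (Fin 2) (Fin 2) ℝ) (v : E2) : E2 :=
  (WithLp.equiv 2 (Fin 2 → ℝ)).symm (M.mulVec ((WithLp.equiv 2 (Fin 2 → ℝ)) v))

/-- The point of the circle of radius `s` at angle `φ`. -/
def circlePt (s φ : ℝ) : E2 := WithLp.toLp 2 ![s * Real.cos φ, s * Real.sin φ]

/-- Radial derivative of a function on ℝ². -/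
def radDeriv (f : E2 → ℝ) (x : E2) : ℝ := ⟪‖x‖⁻¹ • x, gradient f x⟫

/- ## Auxiliary lemmas -/

lemma radDeriv_eq (f : E2 → ℝ) (x : E2) : radDeriv f x = ‖x‖⁻¹ * (fderiv ℝ f x x) := by
  unfold radDeriv gradient
  rw [real_inner_smul_left, real_inner_comm, InnerProductSpace.toDual_symm_apply]

lemma inner_grad_eq (f : E2 → ℝ) (x y : E2) : ⟪y, gradient f x⟫ = fderiv ℝ f x y := by
  unfold gradient
  rw [real_inner_comm, InnerProductSpace.toDual_symm_apply]

lemma G_hasFDeriv (b : E2) (c : ℝ) (x : E2) (hx : x ≠ 0) :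
    ∃ D' : E2 →L[ℝ] ℝ, HasFDerivAt
      (fun y : E2 => ⟪y, b⟫ * (2*π*‖y‖^2)⁻¹ + (c/(4*π)) * Real.log (‖y‖^2)) D' x ∧
      D' x = -⟪x,b⟫/(2*π*‖x‖^2) + c/(2*π) := by
  have hπ : (0:ℝ) < π := Real.pi_pos
  have hx0 : (0:ℝ) < ‖x‖ := norm_pos_iff.mpr hx
  have hxn : (0:ℝ) < ‖x‖^2 := by positivity
  have hD0 : (0:ℝ) < 2*π*‖x‖^2 := by positivity
  have hD : (2*π*‖x‖^2) ≠ 0 := hD0.ne'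
  have hN : HasFDerivAt (fun y : E2 => ⟪y, b⟫) (innerSL ℝ b) x := by
    have : (fun y : E2 => ⟪y, b⟫) = fun y => innerSL ℝ b y := by
      funext y; exact real_inner_comm _ _
    rw [this]; exact (innerSL ℝ b).hasFDerivAt
  have hQ : HasFDerivAt (fun y : E2 => ‖y‖^2) (2 • (innerSL ℝ x)) x :=
    (hasStrictFDerivAt_norm_sq x).hasFDerivAt
  have hDen : HasFDerivAt (fun y : E2 => 2*π*‖y‖^2) ((2*π) • (2 • (innerSL ℝ x))) x :=
    hQ.const_mul _
  have hInv : HasFDerivAt (fun y : E2 => (2*π*‖y‖^2)⁻¹)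
      ((-((2*π*‖x‖^2)^2)⁻¹) • ((2*π) • (2 • (innerSL ℝ x)))) x :=
    (hasDerivAt_inv hD).comp_hasFDerivAt x hDen
  have hlog : HasFDerivAt (fun y : E2 => (c/(4*π)) * Real.log (‖y‖^2))
      ((c/(4*π)) • ((‖x‖^2)⁻¹ • (2 • (innerSL ℝ x)))) x :=
    (hQ.log hxn.ne').const_mul _
  refine ⟨_, (hN.mul hInv).add hlog, ?_⟩
  simp only [ContinuousLinearMap.add_apply, ContinuousLinearMap.smul_apply,
    ContinuousLinearMap.coe_smul', Pi.smul_apply, innerSL_apply_apply, smul_eq_mul,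
    real_inner_self_eq_norm_sq]
  rw [real_inner_comm b x]
  field_simp
  ring

lemma circlePt_decomp (s φ : ℝ) :
    circlePt s φ = (s * Real.cos φ) • (EuclideanSpace.single 0 (1:ℝ))
      + (s * Real.sin φ) • (EuclideanSpace.single 1 (1:ℝ)) := by
  ext i
  fin_cases i <;>
    simp [circlePt, EuclideanSpace.single_apply]

lemma norm_circlePt (s φ : ℝ) : ‖circlePt s φ‖ = |s| := by
  rw [show circlePt s φ = (WithLp.toLp 2 ![s * Real.cos φ, s * Real.sin φ]) from rfl]
  rw [EuclideanSpace.norm_eq]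
  have : (s * Real.cos φ)^2 + (s * Real.sin φ)^2 = s^2 := by
    have := Real.sin_sq_add_cos_sq φ; nlinarith
  simp only [Fin.sum_univ_two]
  rw [show (![s * Real.cos φ, s * Real.sin φ] : Fin 2 → ℝ) 0 = s * Real.cos φ from rfl,
    show (![s * Real.cos φ, s * Real.sin φ] : Fin 2 → ℝ) 1 = s * Real.sin φ from rfl]
  rw [Real.norm_eq_abs, Real.norm_eq_abs, sq_abs, sq_abs, this, Real.sqrt_sq_eq_abs]

lemma circlePt_zero (φ : ℝ) : circlePt 0 φ = 0 := by
  ext i; fin_cases i <;> simp [circlePt]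

lemma circlePt_smul (s φ : ℝ) : circlePt s φ = s • circlePt 1 φ := by
  ext i; fin_cases i <;> simp [circlePt]

lemma continuous_circlePt_right (s : ℝ) : Continuous fun φ => circlePt s φ := by
  simp only [circlePt_decomp s]
  fun_prop

lemma continuous_circlePt_left (φ : ℝ) : Continuous fun s => circlePt s φ := by
  simp only [circlePt_decomp]
  fun_prop

lemma inner_circlePt_one (φ : ℝ) (y : E2) :
    ⟪circlePt 1 φ, y⟫ = Real.cos φ * y 0 + Real.sin φ * y 1 := by
  rw [circlePt_decomp]
  simp [inner_add_left, real_inner_smul_left, EuclideanSpace.inner_single_left]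

lemma integral_aux (K₀ K₁ K₂ K₃ K₄ K₅ : ℝ) :
    ∫ φ in (0:ℝ)..(2*π),
      (K₀ + K₁ * Real.cos φ^2 + K₂ * (Real.cos φ * Real.sin φ) + K₃ * Real.sin φ^2
        + K₄ * Real.cos φ + K₅ * Real.sin φ)
      = 2*π*K₀ + π*K₁ + π*K₃ := by
  have h : ∀ x : ℝ, HasDerivAt (fun x : ℝ =>
      K₀ * x + K₁ * (x/2 + Real.sin x * Real.cos x / 2) + K₂ * (Real.sin x^2/2)
        + K₃ * (x/2 - Real.sin x * Real.cos x / 2) + K₄ * Real.sin x - K₅ * Real.cos x)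
      (K₀ + K₁ * Real.cos x^2 + K₂ * (Real.cos x * Real.sin x) + K₃ * Real.sin x^2
        + K₄ * Real.cos x + K₅ * Real.sin x) x := by
    intro x
    have hs := Real.hasDerivAt_sin x
    have hc := Real.hasDerivAt_cos x
    have h1 : HasDerivAt (fun x : ℝ => Real.sin x * Real.cos x)
        (Real.cos x * Real.cos x + Real.sin x * (-Real.sin x)) x := hs.mul hc
    have h2 : HasDerivAt (fun x : ℝ => Real.sin x ^ 2) (2 * Real.sin x * Real.cos x) x := by
      simpa using hs.fun_pow 2
    have := ((((((hasDerivAt_id x).const_mul K₀).add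
      ((((hasDerivAt_id x).div_const 2).add (h1.div_const 2)).const_mul K₁)).add
      ((h2.div_const 2).const_mul K₂)).add
      ((((hasDerivAt_id x).div_const 2).sub (h1.div_const 2)).const_mul K₃)).add
      (hs.const_mul K₄)).sub (hc.const_mul K₅)
    exact this.congr_deriv (by linear_combination (-(K₁ + K₃)/2) * (Real.sin_sq_add_cos_sq x))
  rw [intervalIntegral.integral_eq_sub_of_hasDerivAt (fun x _ => h x)
    (Continuous.intervalIntegrable (by fun_prop) _ _)]
  simp [Real.sin_two_pi, Real.cos_two_pi]
  ring

lemma abs_mul_log_le_one {s : ℝ} (h0 : 0 < s) (h1 : s ≤ 1) : |s * Real.log s| ≤ 1 := by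
  rcases eq_or_lt_of_le h1 with h | h
  · rw [h, Real.log_one]; norm_num
  · have hlogneg : Real.log s < 0 := Real.log_neg h0 h
    rw [abs_mul, abs_of_pos h0, abs_of_neg hlogneg,
      show -Real.log s = Real.log s⁻¹ by rw [Real.log_inv]]
    have hinv : Real.log s⁻¹ ≤ s⁻¹ - 1 :=
      Real.log_le_sub_one_of_pos (by positivity)
    calc s * Real.log s⁻¹ ≤ s * (s⁻¹ - 1) := by nlinarith
      _ = 1 - s := by field_simp
      _ ≤ 1 := by linarith

set_option maxHeartbeats 2000000 in
theorem circle_flux_limit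
    (r : ℝ) (hr : 0 < r) (v : E2 → ℝ) (hv : ContDiffOn ℝ 1 v (Metric.ball 0 r))
    (M : Matrix (Fin 2) (Fin 2) ℝ) (a : E2) (c : ℝ)
    (g : E2 → ℝ)
    (hg : ∀ x : E2, x ≠ 0 → ‖x‖ < r →
      g x = ⟪x, matVec M a⟫ / (2 * π * ‖x‖ ^ 2) + (c / (2 * π)) * Real.log ‖x‖) :
    Tendsto
      (fun s : ℝ => ∫ φ in (0:ℝ)..(2 * π),
        (v (circlePt s φ) * radDeriv g (circlePt s φ)
          - g (circlePt s φ) * radDeriv v (circlePt s φ)) * s)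
      (𝓝[>] 0)
      (𝓝 (c * v 0 - ⟪matVec M a, gradient v 0⟫)) := by
  have hπ : (0:ℝ) < π := Real.pi_pos
  set b : E2 := matVec M a with hbdef
  set Dv : E2 → E2 →L[ℝ] ℝ := fun x => fderiv ℝ v x with hDvdef
  set inn : ℝ → ℝ := fun φ => ⟪circlePt 1 φ, b⟫ with hinndef
  set ρ : ℝ := min (r/2) 1 with hρdef
  have hρ0 : 0 < ρ := lt_min (by linarith) one_pos
  have hρr : ρ < r := lt_of_le_of_lt (min_le_left _ _) (by linarith)
  have hρ1 : ρ ≤ 1 := min_le_right _ _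
  have hKsub : Metric.closedBall (0:E2) ρ ⊆ Metric.ball 0 r := by
    intro x hx
    rw [Metric.mem_closedBall] at hx
    rw [Metric.mem_ball]
    exact lt_of_le_of_lt hx hρr
  have h0mem : (0:E2) ∈ Metric.ball (0:E2) r := by simp [hr]
  have hdiff : ∀ x ∈ Metric.ball (0:E2) r, DifferentiableAt ℝ v x := fun x hx =>
    (hv.differentiableOn one_ne_zero).differentiableAt (Metric.isOpen_ball.mem_nhds hx)
  have hvc : ContinuousOn v (Metric.ball 0 r) := hv.continuousOn
  have hDvc : ContinuousOn Dv (Metric.ball 0 r) :=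
    hv.continuousOn_fderiv_of_isOpen Metric.isOpen_ball le_rfl
  -- membership of circle points
  have hmem : ∀ s ∈ Ioc (0:ℝ) ρ, ∀ φ : ℝ, circlePt s φ ∈ Metric.closedBall (0:E2) ρ := by
    intro s hs φ
    rw [Metric.mem_closedBall, dist_zero_right, norm_circlePt, abs_of_pos hs.1]
    exact hs.2
  -- g agrees with the nice formula
  have hg' : ∀ x : E2, x ≠ 0 → ‖x‖ < r →
      g x = ⟪x, b⟫ * (2*π*‖x‖^2)⁻¹ + (c/(4*π)) * Real.log (‖x‖^2) := by
    intro x hx hxr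
    rw [hg x hx hxr]
    rw [Real.log_pow]
    push_cast
    field_simp
    ring
  -- radial derivative of g on small circles
  have hradg : ∀ s ∈ Ioc (0:ℝ) ρ, ∀ φ : ℝ,
      radDeriv g (circlePt s φ) = s⁻¹ * (-(s * inn φ)/(2*π*s^2) + c/(2*π)) := by
    intro s hs φ
    have hns : ‖circlePt s φ‖ = s := by rw [norm_circlePt, abs_of_pos hs.1]
    have hx0 : circlePt s φ ≠ 0 := by
      intro h; rw [h, norm_zero] at hns; exact hs.1.ne' hns.symm
    have hxr : ‖circlePt s φ‖ < r := by rw [hns]; exact lt_of_le_of_lt hs.2 hρr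
    obtain ⟨D', hD', hD'x⟩ := G_hasFDeriv b c (circlePt s φ) hx0
    have hgD : HasFDerivAt g D' (circlePt s φ) := by
      refine hD'.congr_of_eventuallyEq ?_
      have hopen : Metric.ball (0:E2) r \ {0} ∈ 𝓝 (circlePt s φ) :=
        (Metric.isOpen_ball.sdiff isClosed_singleton).mem_nhds
          ⟨Metric.mem_ball.mpr (by rwa [dist_zero_right]), hx0⟩
      filter_upwards [hopen] with y hy
      exact hg' y hy.2 (by rw [← dist_zero_right]; exact Metric.mem_ball.mp hy.1)
    rw [radDeriv_eq, hgD.fderiv, hD'x, hns]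
    have hib : (⟪circlePt s φ, b⟫ : ℝ) = s * inn φ := by
      conv_lhs => rw [circlePt_smul s φ]
      rw [real_inner_smul_left]
    rw [hib]
  -- radial derivative of v on small circles
  have hradv : ∀ s ∈ Ioc (0:ℝ) ρ, ∀ φ : ℝ,
      radDeriv v (circlePt s φ) = Dv (circlePt s φ) (circlePt 1 φ) := by
    intro s hs φ
    have hns : ‖circlePt s φ‖ = s := by rw [norm_circlePt, abs_of_pos hs.1]
    rw [radDeriv_eq, hns]
    have heval : (fderiv ℝ v (circlePt s φ)) (circlePt s φ)
        = s * (fderiv ℝ v (circlePt s φ)) (circlePt 1 φ) := by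
      nth_rewrite 2 [circlePt_smul s φ]
      rw [ContinuousLinearMap.map_smul, smul_eq_mul]
    show s⁻¹ * (fderiv ℝ v (circlePt s φ)) (circlePt s φ) = _
    rw [heval, inv_mul_cancel_left₀ hs.1.ne']
  -- the regularized integrand
  set H : ℝ → ℝ → ℝ := fun s φ =>
    (c/(2*π)) * v (circlePt s φ)
    - (1/(2*π)) * inn φ * ((v (circlePt s φ) - v 0)/s)
    - (1/(2*π)) * inn φ * (Dv (circlePt s φ) (circlePt 1 φ))
    - (c/(2*π)) * (s * Real.log s) * (Dv (circlePt s φ) (circlePt 1 φ)) with hHdef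
  set fl : ℝ → ℝ := fun φ =>
    (c/(2*π)) * v 0
    - (1/(2*π)) * inn φ * (Dv 0 (circlePt 1 φ))
    - (1/(2*π)) * inn φ * (Dv 0 (circlePt 1 φ))
    - (c/(2*π)) * 0 * (Dv 0 (circlePt 1 φ)) with hfldef
  have hIoc : Ioc (0:ℝ) ρ ∈ 𝓝[>] (0:ℝ) :=
    Ioc_mem_nhdsGT_of_mem ⟨le_refl 0, hρ0⟩
  -- continuity in φ
  have hcontv : ∀ s ∈ Ioc (0:ℝ) ρ, Continuous fun φ => v (circlePt s φ) := by
    intro s hs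
    exact hvc.comp_continuous (continuous_circlePt_right s)
      (fun φ => hKsub (hmem s hs φ))
  have hcontDv : ∀ s ∈ Ioc (0:ℝ) ρ, Continuous fun φ => Dv (circlePt s φ) (circlePt 1 φ) := by
    intro s hs
    exact (hDvc.comp_continuous (continuous_circlePt_right s)
      (fun φ => hKsub (hmem s hs φ))).clm_apply (continuous_circlePt_right 1)
  have hcontinn : Continuous inn := by
    rw [hinndef]
    exact (continuous_circlePt_right 1).inner continuous_const
  have hcontH : ∀ s ∈ Ioc (0:ℝ) ρ, Continuous (H s) := by
    intro s hs
    rw [hHdef]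
    exact ((((continuous_const.mul (hcontv s hs)).sub
      ((continuous_const.mul hcontinn).mul
        (((hcontv s hs).sub continuous_const).div_const s))).sub
      ((continuous_const.mul hcontinn).mul (hcontDv s hs))).sub
      (continuous_const.mul (hcontDv s hs)))
  -- eventual equality of the integrals
  have heq : (fun s : ℝ => ∫ φ in (0:ℝ)..(2 * π),
        (v (circlePt s φ) * radDeriv g (circlePt s φ)
          - g (circlePt s φ) * radDeriv v (circlePt s φ)) * s)
      =ᶠ[𝓝[>] (0:ℝ)] fun s => ∫ φ in (0:ℝ)..(2 * π), H s φ := by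
    filter_upwards [hIoc] with s hs
    have hs0 : (0:ℝ) < s := hs.1
    have hptwise : ∀ φ : ℝ,
        (v (circlePt s φ) * radDeriv g (circlePt s φ)
          - g (circlePt s φ) * radDeriv v (circlePt s φ)) * s
        = H s φ + (-(v 0)/(2*π*s)) * inn φ := by
      intro φ
      have hns : ‖circlePt s φ‖ = s := by rw [norm_circlePt, abs_of_pos hs0]
      have hx0 : circlePt s φ ≠ 0 := by
        intro h; rw [h, norm_zero] at hns; exact hs0.ne' hns.symm
      have hxr : ‖circlePt s φ‖ < r := by rw [hns]; exact lt_of_le_of_lt hs.2 hρr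
      rw [hradg s hs φ, hradv s hs φ, hg' _ hx0 hxr, hns]
      rw [hHdef]
      have hlogsq : Real.log (s^2) = 2 * Real.log s := by
        rw [Real.log_pow]; push_cast; ring
      rw [show (⟪circlePt s φ, b⟫ : ℝ) = s * inn φ by
        rw [circlePt_smul, real_inner_smul_left]]
      rw [hlogsq]
      field_simp
      ring
    have hint1 : IntervalIntegrable (H s) volume 0 (2*π) :=
      (hcontH s hs).intervalIntegrable _ _
    have hint2 : IntervalIntegrable (fun φ => (-(v 0)/(2*π*s)) * inn φ) volume 0 (2*π) :=
      (continuous_const.mul hcontinn).intervalIntegrable _ _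
    rw [show (fun φ => (v (circlePt s φ) * radDeriv g (circlePt s φ)
          - g (circlePt s φ) * radDeriv v (circlePt s φ)) * s)
        = fun φ => H s φ + (-(v 0)/(2*π*s)) * inn φ from funext hptwise]
    rw [intervalIntegral.integral_add hint1 hint2]
    have : (∫ φ in (0:ℝ)..(2*π), (-(v 0)/(2*π*s)) * inn φ)
        = (-(v 0)/(2*π*s)) * ∫ φ in (0:ℝ)..(2*π), inn φ := by
      rw [intervalIntegral.integral_const_mul]
    rw [this]
    have hinn0 : (∫ φ in (0:ℝ)..(2*π), inn φ) = 0 := by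
      have : (fun φ => inn φ) = fun φ =>
          (0 + 0 * Real.cos φ^2 + 0 * (Real.cos φ * Real.sin φ) + 0 * Real.sin φ^2
            + (b 0) * Real.cos φ + (b 1) * Real.sin φ) := by
        funext φ
        rw [hinndef]
        simp only [inner_circlePt_one]
        ring
      rw [this, integral_aux]
      ring
    rw [hinn0]
    ring
  -- measurability
  have hmeas : ∀ᶠ s in 𝓝[>] (0:ℝ),
      AEStronglyMeasurable (H s) (volume.restrict (Set.uIoc (0:ℝ) (2*π))) := by
    filter_upwards [hIoc] with s hs
    exact (hcontH s hs).aestronglyMeasurable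
  -- bounds
  obtain ⟨C₁, hC₁⟩ := (isCompact_closedBall (0:E2) ρ).exists_bound_of_continuousOn
    (hvc.mono hKsub)
  obtain ⟨C₂, hC₂⟩ := (isCompact_closedBall (0:E2) ρ).exists_bound_of_continuousOn
    (hDvc.mono hKsub)
  have hC₂0 : 0 ≤ C₂ := le_trans (norm_nonneg _)
    (hC₂ 0 (Metric.mem_closedBall_self hρ0.le))
  have hC₁0 : 0 ≤ C₁ := le_trans (norm_nonneg _)
    (hC₁ 0 (Metric.mem_closedBall_self hρ0.le))
  have hbound : ∀ᶠ s in 𝓝[>] (0:ℝ), ∀ᵐ φ ∂(volume : Measure ℝ), φ ∈ Set.uIoc (0:ℝ) (2*π) →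
      ‖H s φ‖ ≤ |c|/(2*π) * C₁ + 1/(2*π) * ‖b‖ * C₂ + 1/(2*π) * ‖b‖ * C₂
        + |c|/(2*π) * C₂ := by
    filter_upwards [hIoc] with s hs
    refine ae_of_all _ fun φ _ => ?_
    have hs0 : (0:ℝ) < s := hs.1
    have hxK : circlePt s φ ∈ Metric.closedBall (0:E2) ρ := hmem s hs φ
    have hns : ‖circlePt s φ‖ = s := by rw [norm_circlePt, abs_of_pos hs0]
    have hn1 : ‖circlePt 1 φ‖ = 1 := by rw [norm_circlePt]; norm_num
    -- individual bounds
    have hb1 : |v (circlePt s φ)| ≤ C₁ := hC₁ _ hxK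
    have hb2 : |inn φ| ≤ ‖b‖ := by
      rw [hinndef]
      calc |⟪circlePt 1 φ, b⟫| ≤ ‖circlePt 1 φ‖ * ‖b‖ := abs_real_inner_le_norm _ _
        _ = ‖b‖ := by rw [hn1, one_mul]
    have hb3 : |Dv (circlePt s φ) (circlePt 1 φ)| ≤ C₂ := by
      calc |Dv (circlePt s φ) (circlePt 1 φ)|
          ≤ ‖Dv (circlePt s φ)‖ * ‖circlePt 1 φ‖ := (Dv (circlePt s φ)).le_opNorm _
        _ = ‖Dv (circlePt s φ)‖ := by rw [hn1, mul_one]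
        _ ≤ C₂ := hC₂ _ hxK
    have hb4 : |(v (circlePt s φ) - v 0)/s| ≤ C₂ := by
      have := Convex.norm_image_sub_le_of_norm_fderiv_le
        (f := v) (s := Metric.closedBall (0:E2) ρ) (C := C₂)
        (fun x hx => hdiff x (hKsub hx)) (fun x hx => hC₂ x hx)
        (convex_closedBall _ _) (Metric.mem_closedBall_self hρ0.le) hxK
      rw [sub_zero, hns] at this
      rw [abs_div, abs_of_pos hs0, div_le_iff₀ hs0]
      exact this
    have hb5 : |s * Real.log s| ≤ 1 := abs_mul_log_le_one hs0 (hs.2.trans hρ1)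
    rw [Real.norm_eq_abs, hHdef]
    have e1 : |(c/(2*π)) * v (circlePt s φ)| ≤ |c|/(2*π) * C₁ := by
      rw [abs_mul, abs_div, abs_of_pos (by positivity : (0:ℝ) < 2*π)]
      exact mul_le_mul_of_nonneg_left hb1 (by positivity)
    have e2 : |(1/(2*π)) * inn φ * ((v (circlePt s φ) - v 0)/s)| ≤ 1/(2*π) * ‖b‖ * C₂ := by
      rw [abs_mul, abs_mul, abs_of_pos (by positivity : (0:ℝ) < 1/(2*π))]
      have h1 : (1/(2*π)) * |inn φ| ≤ 1/(2*π) * ‖b‖ :=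
        mul_le_mul_of_nonneg_left hb2 (by positivity)
      exact mul_le_mul h1 hb4 (abs_nonneg _) (by positivity)
    have e3 : |(1/(2*π)) * inn φ * (Dv (circlePt s φ) (circlePt 1 φ))| ≤ 1/(2*π) * ‖b‖ * C₂ := by
      rw [abs_mul, abs_mul, abs_of_pos (by positivity : (0:ℝ) < 1/(2*π))]
      have h1 : (1/(2*π)) * |inn φ| ≤ 1/(2*π) * ‖b‖ :=
        mul_le_mul_of_nonneg_left hb2 (by positivity)
      exact mul_le_mul h1 hb3 (abs_nonneg _) (by positivity)
    have e4 : |(c/(2*π)) * (s * Real.log s) * (Dv (circlePt s φ) (circlePt 1 φ))|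
        ≤ |c|/(2*π) * C₂ := by
      rw [abs_mul, abs_mul]
      have h1 : |c/(2*π)| * |s * Real.log s| ≤ |c|/(2*π) * 1 := by
        rw [abs_div, abs_of_pos (by positivity : (0:ℝ) < 2*π)]
        exact mul_le_mul_of_nonneg_left hb5 (by positivity)
      calc |c/(2*π)| * |s * Real.log s| * |Dv (circlePt s φ) (circlePt 1 φ)|
          ≤ (|c|/(2*π) * 1) * C₂ := mul_le_mul h1 hb3 (abs_nonneg _) (by positivity)
        _ = |c|/(2*π) * C₂ := by ring
    calc |(c/(2*π)) * v (circlePt s φ)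
        - (1/(2*π)) * inn φ * ((v (circlePt s φ) - v 0)/s)
        - (1/(2*π)) * inn φ * (Dv (circlePt s φ) (circlePt 1 φ))
        - (c/(2*π)) * (s * Real.log s) * (Dv (circlePt s φ) (circlePt 1 φ))|
        ≤ |(c/(2*π)) * v (circlePt s φ)
            - (1/(2*π)) * inn φ * ((v (circlePt s φ) - v 0)/s)
            - (1/(2*π)) * inn φ * (Dv (circlePt s φ) (circlePt 1 φ))|
          + |(c/(2*π)) * (s * Real.log s) * (Dv (circlePt s φ) (circlePt 1 φ))| :=
        abs_sub _ _
      _ ≤ (|(c/(2*π)) * v (circlePt s φ)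
            - (1/(2*π)) * inn φ * ((v (circlePt s φ) - v 0)/s)|
          + |(1/(2*π)) * inn φ * (Dv (circlePt s φ) (circlePt 1 φ))|)
          + |(c/(2*π)) * (s * Real.log s) * (Dv (circlePt s φ) (circlePt 1 φ))| := by
        gcongr; exact abs_sub _ _
      _ ≤ ((|(c/(2*π)) * v (circlePt s φ)|
            + |(1/(2*π)) * inn φ * ((v (circlePt s φ) - v 0)/s)|)
          + |(1/(2*π)) * inn φ * (Dv (circlePt s φ) (circlePt 1 φ))|)
          + |(c/(2*π)) * (s * Real.log s) * (Dv (circlePt s φ) (circlePt 1 φ))| := by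
        gcongr; exact abs_sub _ _
      _ ≤ ((|c|/(2*π) * C₁ + 1/(2*π) * ‖b‖ * C₂) + 1/(2*π) * ‖b‖ * C₂) + |c|/(2*π) * C₂ := by
        gcongr
      _ = |c|/(2*π) * C₁ + 1/(2*π) * ‖b‖ * C₂ + 1/(2*π) * ‖b‖ * C₂ + |c|/(2*π) * C₂ := by
        ring
  -- pointwise limit
  have hlim : ∀ᵐ φ ∂(volume : Measure ℝ), φ ∈ Set.uIoc (0:ℝ) (2*π) →
      Tendsto (fun s => H s φ) (𝓝[>] (0:ℝ)) (𝓝 (fl φ)) := by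
    refine ae_of_all _ fun φ _ => ?_
    have hT1 : Tendsto (fun s => v (circlePt s φ)) (𝓝[>] (0:ℝ)) (𝓝 (v 0)) := by
      have hc0 : ContinuousAt v 0 := hvc.continuousAt (Metric.isOpen_ball.mem_nhds h0mem)
      have : Tendsto (fun s : ℝ => circlePt s φ) (𝓝 0) (𝓝 (0:E2)) := by
        have := (continuous_circlePt_left φ).tendsto 0
        rwa [circlePt_zero] at this
      exact (hc0.tendsto.comp this).mono_left nhdsWithin_le_nhds
    have hT3 : Tendsto (fun s => Dv (circlePt s φ) (circlePt 1 φ)) (𝓝[>] (0:ℝ))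
        (𝓝 (Dv 0 (circlePt 1 φ))) := by
      have hc0 : ContinuousAt Dv 0 := hDvc.continuousAt (Metric.isOpen_ball.mem_nhds h0mem)
      have h1 : Tendsto (fun s : ℝ => circlePt s φ) (𝓝 0) (𝓝 (0:E2)) := by
        have := (continuous_circlePt_left φ).tendsto 0
        rwa [circlePt_zero] at this
      have h2 : Tendsto (fun s : ℝ => Dv (circlePt s φ)) (𝓝 0) (𝓝 (Dv 0)) :=
        hc0.tendsto.comp h1
      have h3 := ((ContinuousLinearMap.apply ℝ ℝ (circlePt 1 φ)).continuous.tendsto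
        (Dv 0)).comp h2
      exact h3.mono_left nhdsWithin_le_nhds
    have hT2 : Tendsto (fun s => (v (circlePt s φ) - v 0)/s) (𝓝[>] (0:ℝ))
        (𝓝 (Dv 0 (circlePt 1 φ))) := by
      have hv0 : HasFDerivAt v (Dv 0) 0 := (hdiff 0 h0mem).hasFDerivAt
      have h1 : HasDerivAt (fun s : ℝ => s • circlePt 1 φ) (circlePt 1 φ) 0 := by
        simpa using (hasDerivAt_id (0:ℝ)).smul_const (circlePt 1 φ)
      have hψ : HasDerivAt (fun s : ℝ => v (s • circlePt 1 φ)) (Dv 0 (circlePt 1 φ)) 0 := by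
        have h0 : HasFDerivAt v (Dv 0) ((fun s : ℝ => s • circlePt 1 φ) 0) := by
          simpa using hv0
        have := h0.comp_hasDerivAt 0 h1
        exact this
      rw [hasDerivAt_iff_tendsto_slope] at hψ
      have hmono : 𝓝[>] (0:ℝ) ≤ 𝓝[≠] (0:ℝ) :=
        nhdsWithin_mono 0 (fun x hx => ne_of_gt hx)
      refine ((hψ.mono_left hmono).congr' ?_)
      filter_upwards [self_mem_nhdsWithin] with s hs
      have hs0 : (0:ℝ) < s := hs
      rw [slope_def_field]
      rw [circlePt_smul s φ]
      rw [zero_smul, sub_zero]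
    have hT4 : Tendsto (fun s : ℝ => s * Real.log s) (𝓝[>] (0:ℝ)) (𝓝 0) := by
      have := tendsto_log_mul_rpow_nhdsGT_zero one_pos
      have h2 : Tendsto (fun s : ℝ => Real.log s * s) (𝓝[>] (0:ℝ)) (𝓝 0) := by
        refine this.congr' ?_
        filter_upwards [self_mem_nhdsWithin] with s hs
        rw [Real.rpow_one]
      exact h2.congr (fun s => mul_comm _ _)
    rw [hHdef, hfldef]
    exact (((hT1.const_mul _).sub ((tendsto_const_nhds.mul hT2).congr (fun s => rfl))).sub
      ((tendsto_const_nhds.mul hT3))).sub ((hT4.const_mul _).mul hT3)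
  -- dominated convergence
  have hDCT := intervalIntegral.tendsto_integral_filter_of_dominated_convergence
    (μ := volume) (F := H) (f := fl) (a := 0) (b := 2*π)
    (fun _ => |c|/(2*π) * C₁ + 1/(2*π) * ‖b‖ * C₂ + 1/(2*π) * ‖b‖ * C₂ + |c|/(2*π) * C₂)
    hmeas hbound (intervalIntegrable_const) hlim
  -- compute the limit integral
  have hintfl : (∫ φ in (0:ℝ)..(2*π), fl φ) = c * v 0 - ⟪b, gradient v 0⟫ := by
    have hb_decomp : b = (b 0) • (EuclideanSpace.single 0 (1:ℝ))
        + (b 1) • (EuclideanSpace.single 1 (1:ℝ)) := by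
      ext i
      fin_cases i <;> simp [EuclideanSpace.single_apply]
    have hDvb : ⟪b, gradient v 0⟫
        = (b 0) * (Dv 0 (EuclideanSpace.single 0 (1:ℝ)))
          + (b 1) * (Dv 0 (EuclideanSpace.single 1 (1:ℝ))) := by
      rw [inner_grad_eq]
      conv_lhs => rw [hb_decomp]
      rw [map_add, ContinuousLinearMap.map_smul, ContinuousLinearMap.map_smul]
      simp [hDvdef]
    set d0 : ℝ := Dv 0 (EuclideanSpace.single 0 (1:ℝ)) with hd0
    set d1 : ℝ := Dv 0 (EuclideanSpace.single 1 (1:ℝ)) with hd1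
    have hDvω : ∀ φ : ℝ, Dv 0 (circlePt 1 φ) = Real.cos φ * d0 + Real.sin φ * d1 := by
      intro φ
      rw [circlePt_decomp]
      rw [map_add, ContinuousLinearMap.map_smul, ContinuousLinearMap.map_smul]
      simp [hd0, hd1]
    have hflform : fl = fun φ =>
        ((c/(2*π)) * v 0 + (-(1/π) * (b 0 * d0)) * Real.cos φ^2
          + (-(1/π) * (b 0 * d1 + b 1 * d0)) * (Real.cos φ * Real.sin φ)
          + (-(1/π) * (b 1 * d1)) * Real.sin φ^2
          + 0 * Real.cos φ + 0 * Real.sin φ) := by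
      funext φ
      simp only [hfldef]
      rw [hDvω φ]
      simp only [hinndef, inner_circlePt_one]
      field_simp
      ring
    rw [hflform, integral_aux, hDvb]
    field_simp
    ring
  rw [show (c * v 0 - ⟪b, gradient v 0⟫) = ∫ φ in (0:ℝ)..(2*π), fl φ from hintfl.symm]
  exact Tendsto.congr' heq.symm hDCT

end
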